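/- arXiv:1312.0444 — 2 statements merged into one kernel-verified Lean document; each statement's English description precedes it below -/
import Mathlib

section
/- There exists λ₀ > 0 such that for every λ ≥ λ₀ there exist s₀ > 0 and, for each s ≥ s₀(T⁴ + T⁸), a constant C > 0 (depending on Ω, λ, s, T and η₀) such that the function ρ(t) = e^{(s/2)β*(t) − sβ̂(t)} γ̂(t)^{13/8} satisfies |ρ′(t)| ≤ C e^{−sβ*(t)} (γ*(t))^{−3/2} for all t ∈ (0,T). -/
open MeasureTheory Real Set Filter Metric

noncomputable section

/-- Partial derivative in the `i`-th coordinate direction. -/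
def pd {N : ℕ} (i : Fin N) (f : (Fin N → ℝ) → ℝ) (x : Fin N → ℝ) : ℝ :=
  fderiv ℝ f x (Pi.single i 1)

/-- Spatial gradient. -/
def grad {N : ℕ} (f : (Fin N → ℝ) → ℝ) (x : Fin N → ℝ) : Fin N → ℝ :=
  fun i => pd i f x

/-- Laplacian. -/
def lap {N : ℕ} (f : (Fin N → ℝ) → ℝ) (x : Fin N → ℝ) : ℝ :=
  ∑ i, pd i (fun y => pd i f y) x

/-- Divergence of a vector field. -/
def dvg {N : ℕ} (F : (Fin N → ℝ) → (Fin N → ℝ)) (x : Fin N → ℝ) : ℝ :=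
  ∑ i, pd i (fun y => F y i) x

/-- Euclidean dot product. -/
def dot {N : ℕ} (a b : Fin N → ℝ) : ℝ := ∑ i, a i * b i

/-- Euclidean norm. -/
def eunorm {N : ℕ} (a : Fin N → ℝ) : ℝ := Real.sqrt (∑ i, (a i) ^ 2)

/-- Square of the `H¹(Ω)` norm (classical derivatives). -/
def H1sq {N : ℕ} (Ω : Set (Fin N → ℝ)) (f : (Fin N → ℝ) → ℝ) : ℝ :=
  ∫ x in Ω, ((f x) ^ 2 + ∑ i, (pd i f x) ^ 2)

/-- Square of the `H²(Ω)` norm (classical derivatives). -/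
def H2sq {N : ℕ} (Ω : Set (Fin N → ℝ)) (f : (Fin N → ℝ) → ℝ) : ℝ :=
  ∫ x in Ω, ((f x) ^ 2 + ∑ i, (pd i f x) ^ 2 + ∑ i, ∑ j, (pd i (fun y => pd j f y) x) ^ 2)

/-- Square of the `H³(Ω)` norm (classical derivatives). -/
def H3sq {N : ℕ} (Ω : Set (Fin N → ℝ)) (f : (Fin N → ℝ) → ℝ) : ℝ :=
  ∫ x in Ω, ((f x) ^ 2 + ∑ i, (pd i f x) ^ 2 + ∑ i, ∑ j, (pd i (fun y => pd j f y) x) ^ 2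
    + ∑ i, ∑ j, ∑ k, (pd i (fun y => pd j (fun z => pd k f z) y) x) ^ 2)

/-- Double integral over `D × (0,T)`. -/
def DInt {N : ℕ} (D : Set (Fin N → ℝ)) (T : ℝ) (F : (Fin N → ℝ) → ℝ → ℝ) : ℝ :=
  ∫ t in Ioo (0 : ℝ) T, ∫ x in D, F x t

/-- Sup of `|f|` over the closure of `Ω`. -/
def supAbs {N : ℕ} (Ω : Set (Fin N → ℝ)) (f : (Fin N → ℝ) → ℝ) : ℝ :=
  sSup ((fun x => |f x|) '' closure Ω)

/-- Carleman weight `φ`. -/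
def phiW {N : ℕ} (T lam : ℝ) (η₀ : (Fin N → ℝ) → ℝ) (x : Fin N → ℝ) (t : ℝ) : ℝ :=
  Real.exp (lam * η₀ x) / (t ^ 4 * (T - t) ^ 4)

/-- Carleman weight `α`. -/
def alpW {N : ℕ} (Ω : Set (Fin N → ℝ)) (T lam : ℝ) (η₀ : (Fin N → ℝ) → ℝ)
    (x : Fin N → ℝ) (t : ℝ) : ℝ :=
  (Real.exp (lam * η₀ x) - Real.exp (2 * lam * supAbs Ω η₀)) / (t ^ 4 * (T - t) ^ 4)

/-- The truncated time weight `l`. -/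
def lW (T t : ℝ) : ℝ := if t ≤ T / 2 then T ^ 2 / 4 else t * (T - t)

/-- Weight `β` (non-vanishing at `t = 0`). -/
def betaW {N : ℕ} (Ω : Set (Fin N → ℝ)) (T lam : ℝ) (η₀ : (Fin N → ℝ) → ℝ)
    (x : Fin N → ℝ) (t : ℝ) : ℝ :=
  (Real.exp (lam * η₀ x) - Real.exp (2 * lam * supAbs Ω η₀)) / (lW T t) ^ 4

/-- Weight `γ` (non-vanishing at `t = 0`). -/
def gamW {N : ℕ} (T lam : ℝ) (η₀ : (Fin N → ℝ) → ℝ) (x : Fin N → ℝ) (t : ℝ) : ℝ :=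
  Real.exp (lam * η₀ x) / (lW T t) ^ 4

/-- `γ̂(t) = min over cl Ω of γ(·,t)`. -/
def gamHat {N : ℕ} (Ω : Set (Fin N → ℝ)) (T lam : ℝ) (η₀ : (Fin N → ℝ) → ℝ) (t : ℝ) : ℝ :=
  sInf ((fun x => gamW T lam η₀ x t) '' closure Ω)

/-- `γ*(t) = max over cl Ω of γ(·,t)`. -/
def gamStar {N : ℕ} (Ω : Set (Fin N → ℝ)) (T lam : ℝ) (η₀ : (Fin N → ℝ) → ℝ) (t : ℝ) : ℝ :=
  sSup ((fun x => gamW T lam η₀ x t) '' closure Ω)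

/-- `β̂(t) = min over cl Ω of β(·,t)`. -/
def betaHat {N : ℕ} (Ω : Set (Fin N → ℝ)) (T lam : ℝ) (η₀ : (Fin N → ℝ) → ℝ) (t : ℝ) : ℝ :=
  sInf ((fun x => betaW Ω T lam η₀ x t) '' closure Ω)

/-- `β*(t) = max over cl Ω of β(·,t)`. -/
def betaStar {N : ℕ} (Ω : Set (Fin N → ℝ)) (T lam : ℝ) (η₀ : (Fin N → ℝ) → ℝ) (t : ℝ) : ℝ :=
  sSup ((fun x => betaW Ω T lam η₀ x t) '' closure Ω)

/-- Smoothness on the closed cylinder `cl(Ω) × [0,T]`. -/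
def SmoothOnClQ {N : ℕ} (Ω : Set (Fin N → ℝ)) (T : ℝ) (q : (Fin N → ℝ) → ℝ → ℝ) : Prop :=
  ContDiffOn ℝ (⊤ : ℕ∞) (fun p : (Fin N → ℝ) × ℝ => q p.1 p.2) (closure Ω ×ˢ Icc 0 T)

/-- The Carleman functional `I_β(s,σ;q)`. -/
def IB {N : ℕ} (Ω : Set (Fin N → ℝ)) (T lam : ℝ) (η₀ : (Fin N → ℝ) → ℝ)
    (s β σq : ℝ) (q : (Fin N → ℝ) → ℝ → ℝ) : ℝ :=
  s ^ (β + 3) * DInt Ω T (fun x t =>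
      Real.exp (2 * s * alpW Ω T lam η₀ x t) * phiW T lam η₀ x t ^ (β + 3) * (q x t) ^ 2)
  + s ^ (β + 1) * DInt Ω T (fun x t =>
      Real.exp (2 * s * alpW Ω T lam η₀ x t) * phiW T lam η₀ x t ^ (β + 1) *
        ∑ i, (pd i (fun y => q y t) x) ^ 2)
  + s ^ (β - 1) * DInt Ω T (fun x t =>
      Real.exp (2 * s * alpW Ω T lam η₀ x t) * phiW T lam η₀ x t ^ (β - 1) *
        (σq ^ 2 * (deriv (q x) t) ^ 2 +
          ∑ i, ∑ j, (pd i (fun y => pd j (fun z => q z t) y) x) ^ 2))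

/-- The auxiliary weight `θ = ρ₁ s³ φ³ e^{sα}`. -/
def thetaW {N : ℕ} (Ω : Set (Fin N → ℝ)) (T lam : ℝ) (η₀ ρ₁ : (Fin N → ℝ) → ℝ)
    (s : ℝ) (x : Fin N → ℝ) (t : ℝ) : ℝ :=
  ρ₁ x * s ^ 3 * phiW T lam η₀ x t ^ 3 * Real.exp (s * alpW Ω T lam η₀ x t)

/-- The `H⁻¹(Ω)` norm, defined by duality against smooth compactly supported functions. -/
def Hm1 {N : ℕ} (Ω : Set (Fin N → ℝ)) (g : (Fin N → ℝ) → ℝ) : ℝ :=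
  sSup {r : ℝ | ∃ v : (Fin N → ℝ) → ℝ, ContDiff ℝ (⊤ : ℕ∞) v ∧ HasCompactSupport v ∧
    tsupport v ⊆ Ω ∧ (∫ x in Ω, ∑ i, (pd i v x) ^ 2) ≤ 1 ∧ r = ∫ x in Ω, g x * v x}

lemma rpow_le_exp_aux (B q : ℝ) (hB : 0 < B) (hq : 0 ≤ q) :
    ∃ C > (0:ℝ), ∀ v : ℝ, 0 < v → v ^ q ≤ C * Real.exp (B * v) := by
  set m : ℕ := ⌈q⌉₊ + 1 with hm
  refine ⟨1 + ((m : ℝ) / B) ^ m, by positivity, fun v hv => ?_⟩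
  have hexp : (0:ℝ) < Real.exp (B * v) := Real.exp_pos _
  have hmpos : (0:ℝ) < m := by positivity
  have key : v ^ m ≤ ((m : ℝ) / B) ^ m * Real.exp (B * v) := by
    have h1 : B * v / m ≤ Real.exp (B * v / m) := by
      have := Real.add_one_le_exp (B * v / m)
      nlinarith [div_pos (mul_pos hB hv) hmpos]
    have h2 : (B * v / m) ^ m ≤ (Real.exp (B * v / m)) ^ m := by
      apply pow_le_pow_left₀ (by positivity) h1
    have h3 : (Real.exp (B * v / m)) ^ m = Real.exp (B * v) := by
      rw [← Real.exp_nat_mul]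
      congr 1
      field_simp
    rw [h3] at h2
    have : ((m : ℝ) / B) ^ m * (B * v / m) ^ m = v ^ m := by
      rw [← mul_pow]
      field_simp
    calc v ^ m = ((m : ℝ) / B) ^ m * (B * v / m) ^ m := this.symm
      _ ≤ ((m : ℝ) / B) ^ m * Real.exp (B * v) := by
          apply mul_le_mul_of_nonneg_left h2 (by positivity)
  rcases le_or_gt v 1 with hv1 | hv1
  · have : v ^ q ≤ 1 := Real.rpow_le_one hv.le hv1 hq
    have h1le : (1:ℝ) ≤ Real.exp (B * v) := Real.one_le_exp (by positivity)
    nlinarith [pow_nonneg (le_of_lt (div_pos hmpos hB)) m]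
  · have hq' : v ^ q ≤ v ^ (m : ℝ) := by
      apply Real.rpow_le_rpow_of_exponent_le hv1.le
      calc q ≤ (⌈q⌉₊ : ℝ) := Nat.le_ceil q
        _ ≤ m := by rw [hm]; push_cast; linarith
    rw [Real.rpow_natCast] at hq'
    nlinarith [Real.exp_pos (B*v)]

set_option maxHeartbeats 1000000 in
/-- Bound for the time derivative of the weight
`ρ(t) = e^{(s/2)β* − sβ̂} γ̂^{13/8}`. -/
theorem weight_rho_case1_estimate
    (N : ℕ) (hN : N = 2 ∨ N = 3) (Ω : Set (Fin N → ℝ))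
    (hΩo : IsOpen Ω) (hΩconn : IsConnected Ω) (hΩb : Bornology.IsBounded Ω)
    (T : ℝ) (hT : 0 < T)
    (ω₀ ω' ω : Set (Fin N → ℝ)) (hω₀o : IsOpen ω₀) (hω'o : IsOpen ω') (hωo : IsOpen ω)
    (hω₀ne : ω₀.Nonempty) (hω'ne : ω'.Nonempty) (hωne : ω.Nonempty)
    (hω₀ω' : closure ω₀ ⊆ ω') (hω'ω : closure ω' ⊆ ω) (hωΩ : closure ω ⊆ Ω)
    (η₀ : (Fin N → ℝ) → ℝ) (hη₀sm : ContDiffOn ℝ 2 η₀ (closure Ω))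
    (hη₀pos : ∀ x ∈ Ω, 0 < η₀ x) (hη₀bd : ∀ x ∈ frontier Ω, η₀ x = 0)
    (hη₀grad : ∀ x ∈ closure Ω \ ω₀, 0 < eunorm (grad η₀ x))
    :
    ∃ lam₀ > (0 : ℝ), ∀ lam : ℝ, lam₀ ≤ lam →
      ∃ s₀ > (0 : ℝ), ∀ s : ℝ, s₀ * (T ^ 4 + T ^ 8) ≤ s →
        ∃ C > (0 : ℝ), ∀ t ∈ Ioo (0 : ℝ) T, t ≠ T / 2 →
          |deriv (fun τ => Real.exp ((s / 2) * betaStar Ω T lam η₀ τ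
              - s * betaHat Ω T lam η₀ τ) * gamHat Ω T lam η₀ τ ^ ((13 : ℝ) / 8)) t| ≤
            C * Real.exp (-s * betaStar Ω T lam η₀ t) *
              gamStar Ω T lam η₀ t ^ (-(3 : ℝ) / 2) := by
  have hNpos : 0 < N := by rcases hN with h | h <;> omega
  haveI : Nonempty (Fin N) := ⟨⟨0, hNpos⟩⟩
  have hK : IsCompact (closure Ω) := hΩb.isCompact_closure
  have hΩne : Ω.Nonempty := hΩconn.nonempty
  have hKne : (closure Ω).Nonempty := hΩne.closure
  have hcont : ContinuousOn η₀ (closure Ω) := hη₀sm.continuousOn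
  set S := η₀ '' closure Ω with hS
  have hSne : S.Nonempty := hKne.image _
  have hScpt : IsCompact S := hK.image_of_continuousOn hcont
  have hSbddA : BddAbove S := hScpt.bddAbove
  have hSbddB : BddBelow S := hScpt.bddBelow
  set M := sSup S with hMdef
  -- η₀ ≥ 0 on closure Ω
  have hnonneg : ∀ x ∈ closure Ω, 0 ≤ η₀ x := by
    intro x hx
    rcases (em (x ∈ Ω)) with hxΩ | hxΩ
    · exact (hη₀pos x hxΩ).le
    · have : x ∈ frontier Ω := by
        rw [hΩo.frontier_eq]; exact ⟨hx, hxΩ⟩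
      rw [hη₀bd x this]
  -- 0 is attained (frontier nonempty)
  have hfr : (frontier Ω).Nonempty := by
    rw [nonempty_frontier_iff]
    refine ⟨hΩne, fun h => ?_⟩
    exact NormedSpace.unbounded_univ ℝ (Fin N → ℝ) (h ▸ hΩb)
  have h0S : (0:ℝ) ∈ S := by
    obtain ⟨x, hx⟩ := hfr
    exact ⟨x, frontier_subset_closure hx, hη₀bd x hx⟩
  have hInfS : sInf S = 0 := by
    apply le_antisymm (csInf_le hSbddB h0S)
    apply le_csInf hSne
    rintro b ⟨x, hx, rfl⟩
    exact hnonneg x hx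
  have hMpos : 0 < M := by
    obtain ⟨x, hx⟩ := hωne
    have hxΩ : x ∈ Ω := hωΩ (subset_closure hx)
    have : η₀ x ≤ M := le_csSup hSbddA ⟨x, subset_closure hxΩ, rfl⟩
    linarith [hη₀pos x hxΩ]
  have hsupAbs : supAbs Ω η₀ = M := by
    rw [supAbs, hMdef, hS]
    congr 1
    apply Set.image_congr
    intro x hx
    exact abs_of_nonneg (hnonneg x hx)
  have hform : ∀ lam : ℝ, 0 < lam → ∀ τ : ℝ, 0 < lW T τ →
      betaStar Ω T lam η₀ τ = (Real.exp (lam*M) - Real.exp (2*lam*M)) / (lW T τ)^4 ∧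
      betaHat Ω T lam η₀ τ = (1 - Real.exp (2*lam*M)) / (lW T τ)^4 ∧
      gamHat Ω T lam η₀ τ = 1 / (lW T τ)^4 ∧
      gamStar Ω T lam η₀ τ = Real.exp (lam*M) / (lW T τ)^4 := by
    intro lam hlam τ hLτ
    have hc4 : (0:ℝ) < (lW T τ)^4 := by positivity
    have gen : ∀ g : ℝ → ℝ, Monotone g → Continuous g →
        (sSup ((fun x => g (η₀ x)) '' closure Ω) = g M ∧
         sInf ((fun x => g (η₀ x)) '' closure Ω) = g 0) := by
      intro g hmono hgc
      have himg : (fun x => g (η₀ x)) '' closure Ω = g '' S := by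
        rw [hS, ← Set.image_comp]; rfl
      constructor
      · rw [himg, ← hmono.map_csSup_of_continuousAt hgc.continuousAt hSne hSbddA, hMdef]
      · rw [himg, ← hmono.map_csInf_of_continuousAt hgc.continuousAt hSne hSbddB, hInfS]
    have hmono1 : Monotone (fun u : ℝ => (Real.exp (lam*u) - Real.exp (2*lam*M)) / (lW T τ)^4) := by
      intro u v huv
      dsimp only
      gcongr
    have hmono2 : Monotone (fun u : ℝ => Real.exp (lam*u) / (lW T τ)^4) := by
      intro u v huv
      dsimp only
      gcongr
    have hcont1 : Continuous (fun u : ℝ => (Real.exp (lam*u) - Real.exp (2*lam*M)) / (lW T τ)^4) := by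
      fun_prop
    have hcont2 : Continuous (fun u : ℝ => Real.exp (lam*u) / (lW T τ)^4) := by fun_prop
    refine ⟨?_, ?_, ?_, ?_⟩
    · rw [betaStar]
      simp only [betaW, hsupAbs]
      exact (gen _ hmono1 hcont1).1
    · rw [betaHat]
      simp only [betaW, hsupAbs]
      have := (gen _ hmono1 hcont1).2
      rw [this, mul_zero, Real.exp_zero]
    · rw [gamHat]
      simp only [gamW]
      have := (gen _ hmono2 hcont2).2
      rw [this, mul_zero, Real.exp_zero]
    · rw [gamStar]
      simp only [gamW]
      exact (gen _ hmono2 hcont2).1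
  clear hη₀sm hη₀pos hη₀bd hnonneg h0S hInfS hcont hS hScpt hfr
  clear_value S M
  clear hMdef hSne hSbddA hSbddB hK hKne hΩne
  have hlam₀pos : (0:ℝ) < Real.log 3 / M := div_pos (Real.log_pos (by norm_num)) hMpos
  refine ⟨Real.log 3 / M, hlam₀pos, ?_⟩
  intro lam hlam
  have hlam0 : 0 < lam := lt_of_lt_of_le hlam₀pos hlam
  obtain ⟨a, hadef⟩ : ∃ a, a = Real.exp (lam * M) := ⟨_, rfl⟩
  obtain ⟨E, hEdef⟩ : ∃ E, E = Real.exp (2 * lam * M) := ⟨_, rfl⟩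
  have hapos : 0 < a := hadef ▸ Real.exp_pos _
  have hEa : E = a * a := by
    rw [hadef, hEdef, ← Real.exp_add]; ring_nf
  have ha2 : 2 < a := by
    have h3 : Real.log 3 ≤ lam * M := by
      rw [div_le_iff₀ hMpos] at hlam; linarith
    have : (3:ℝ) = Real.exp (Real.log 3) := (Real.exp_log (by norm_num)).symm
    have h4 : (3:ℝ) ≤ a := by
      rw [hadef, this]; exact Real.exp_le_exp.2 h3
    linarith
  refine ⟨1, one_pos, ?_⟩
  intro s hs
  have hspos : 0 < s := by nlinarith [pow_pos hT 4, pow_pos hT 8]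
  obtain ⟨c₁, hc1def⟩ : ∃ c₁ : ℝ, c₁ = s/2*(a-E) - s*(1-E) := ⟨_, rfl⟩
  obtain ⟨B, hBdef⟩ : ∃ B : ℝ, B = s*(E-a) - c₁ := ⟨_, rfl⟩
  have hB : 0 < B := by
    rw [hBdef, hc1def, hEa]
    nlinarith [mul_pos hspos (mul_pos (show (0:ℝ) < a - 1 by linarith)
      (show (0:ℝ) < a - 2 by linarith))]
  obtain ⟨Kd, hKddef⟩ : ∃ Kd : ℝ, Kd = 4*(T^2/4)^3*T := ⟨_, rfl⟩
  have hKd0 : 0 < Kd := by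
    rw [hKddef]
    exact mul_pos (mul_pos (by norm_num) (pow_pos (by positivity) 3)) hT
  obtain ⟨C₁, hC₁, hC₁le⟩ := rpow_le_exp_aux B ((41:ℝ)/8) hB (by norm_num)
  obtain ⟨C₂, hC₂, hC₂le⟩ := rpow_le_exp_aux B ((33:ℝ)/8) hB (by norm_num)
  obtain ⟨C, hCdef⟩ : ∃ C : ℝ,
      C = Kd * a^((3:ℝ)/2) * (|c₁| * C₁ + ((13:ℝ)/8)*C₂) := ⟨_, rfl⟩
  have hCpos : 0 < C := by
    rw [hCdef]
    refine mul_pos (mul_pos hKd0 (Real.rpow_pos_of_pos hapos _)) ?_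
    have h1 : 0 ≤ |c₁| * C₁ := mul_nonneg (abs_nonneg _) hC₁.le
    nlinarith
  refine ⟨C, hCpos, ?_⟩
  intro t ht htne
  have hlWpos : ∀ τ : ℝ, τ ∈ Ioo (0:ℝ) T → 0 < lW T τ := by
    intro τ hτ
    rw [lW]
    split_ifs with h
    · positivity
    · push_neg at h
      exact mul_pos (lt_trans (by linarith) h) (by linarith [hτ.2])
  have hlWt : 0 < lW T t := hlWpos t ht
  obtain ⟨hbS, hbH, hgH, hgS⟩ := hform lam hlam0 t hlWt
  rw [← hEdef] at hbS hbH
  rw [← hadef] at hbS hgS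
  have hRHSpos : 0 < Real.exp (-s * betaStar Ω T lam η₀ t) *
      gamStar Ω T lam η₀ t ^ (-(3 : ℝ) / 2) := by
    refine mul_pos (Real.exp_pos _) ?_
    rw [hgS]
    exact Real.rpow_pos_of_pos (by positivity) _
  rcases lt_or_gt_of_ne htne with hlt | hgt
  · -- case t < T/2 : the function is locally constant
    have hconst : (fun τ => Real.exp ((s / 2) * betaStar Ω T lam η₀ τ
          - s * betaHat Ω T lam η₀ τ) * gamHat Ω T lam η₀ τ ^ ((13 : ℝ) / 8)) =ᶠ[nhds t]
        (fun _ => Real.exp ((s / 2) * ((a - E)/(T^2/4)^4) - s * ((1 - E)/(T^2/4)^4)) *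
          (1/(T^2/4)^4) ^ ((13 : ℝ) / 8)) := by
      filter_upwards [Iio_mem_nhds hlt] with τ hτ
      have hlwτ : lW T τ = T^2/4 := if_pos (le_of_lt hτ)
      have hlwpos : 0 < lW T τ := by rw [hlwτ]; positivity
      obtain ⟨b1, b2, b3, _⟩ := hform lam hlam0 τ hlwpos
      rw [← hEdef] at b1 b2
      rw [← hadef] at b1
      rw [b1, b2, b3, hlwτ]
    rw [hconst.deriv_eq, deriv_const, abs_zero]
    nlinarith [mul_pos hCpos hRHSpos]
  · -- case t > T/2
    have hLpos : 0 < t*(T-t) :=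
      mul_pos (lt_trans (by linarith) hgt) (by linarith [ht.2])
    have hlwt : lW T t = t*(T-t) := if_neg (not_le.2 hgt)
    have hu0 : (t*(T-t))^4 ≠ 0 := pow_ne_zero 4 (ne_of_gt hLpos)
    obtain ⟨v, hvdef⟩ : ∃ v : ℝ, v = ((t*(T-t))^4)⁻¹ := ⟨_, rfl⟩
    have hv : 0 < v := by rw [hvdef]; exact inv_pos.2 (by positivity)
    -- eventual equality with the explicit function
    have hev : (fun τ => Real.exp ((s / 2) * betaStar Ω T lam η₀ τ
          - s * betaHat Ω T lam η₀ τ) * gamHat Ω T lam η₀ τ ^ ((13 : ℝ) / 8)) =ᶠ[nhds t]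
        (fun τ => Real.exp (c₁ * (((τ*(T-τ))^4)⁻¹)) *
          ((((τ*(T-τ))^4)⁻¹) ^ ((13 : ℝ) / 8))) := by
      filter_upwards [Ioo_mem_nhds hgt ht.2] with τ hτ
      have hlwτ : lW T τ = τ*(T-τ) := if_neg (not_le.2 hτ.1)
      have hlwpos : 0 < lW T τ := by
        rw [hlwτ]
        exact mul_pos (lt_trans (by linarith) hτ.1) (by linarith [hτ.2])
      obtain ⟨b1, b2, b3, _⟩ := hform lam hlam0 τ hlwpos
      rw [← hEdef] at b1 b2
      rw [← hadef] at b1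
      have hτ4 : (τ*(T-τ))^4 ≠ 0 := pow_ne_zero 4 (ne_of_gt (hlwτ ▸ hlwpos))
      rw [b1, b2, b3, hlwτ]
      congr 1
      · congr 1
        rw [hc1def, div_eq_mul_inv, div_eq_mul_inv]
        ring
      · rw [one_div]
    -- derivative computation
    have hg' : HasDerivAt (fun τ : ℝ => τ*(T-τ)) (T - 2*t) t := by
      have h := (hasDerivAt_id t).mul ((hasDerivAt_const t T).sub (hasDerivAt_id t))
      exact h.congr_deriv (by simp; ring)
    have hu' : HasDerivAt (fun τ : ℝ => (τ*(T-τ))^4) (4*(t*(T-t))^3*(T-2*t)) t := by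
      have h := hg'.pow 4
      exact h.congr_deriv (by norm_num)
    have hinv : HasDerivAt (fun τ : ℝ => ((τ*(T-τ))^4)⁻¹)
        (-(4*(t*(T-t))^3*(T-2*t)) / ((t*(T-t))^4)^2) t := hu'.inv hu0
    obtain ⟨d, hddef⟩ : ∃ d : ℝ, d = -(4*(t*(T-t))^3*(T-2*t)) / ((t*(T-t))^4)^2 := ⟨_, rfl⟩
    rw [← hddef] at hinv
    have hexp : HasDerivAt (fun τ : ℝ => Real.exp (c₁ * (((τ*(T-τ))^4)⁻¹)))
        (Real.exp (c₁ * v) * (c₁ * d)) t := by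
      have h := (hinv.const_mul c₁).exp
      rw [← hvdef] at h
      exact h
    have hrpow : HasDerivAt (fun τ : ℝ => (((τ*(T-τ))^4)⁻¹) ^ ((13 : ℝ) / 8))
        (d * ((13:ℝ)/8) * v ^ ((13:ℝ)/8 - 1)) t := by
      have h := hinv.rpow_const (p := (13:ℝ)/8) (Or.inl (hvdef ▸ ne_of_gt hv))
      rw [← hvdef] at h
      exact h
    have hF : HasDerivAt (fun τ : ℝ => Real.exp (c₁ * (((τ*(T-τ))^4)⁻¹)) *
        ((((τ*(T-τ))^4)⁻¹) ^ ((13 : ℝ) / 8)))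
        (Real.exp (c₁ * v) * (c₁ * d) * v ^ ((13:ℝ)/8)
          + Real.exp (c₁ * v) * (d * ((13:ℝ)/8) * v ^ ((13:ℝ)/8 - 1))) t := by
      have h := hexp.mul hrpow
      rw [← hvdef] at h
      exact h
    rw [hev.deriv_eq, hF.deriv]
    -- rewrite the right-hand side
    have harg : -s * betaStar Ω T lam η₀ t = c₁ * v + B * v := by
      rw [hbS, hlwt, hvdef, hBdef, hc1def, div_eq_mul_inv]
      ring
    have hgS' : gamStar Ω T lam η₀ t ^ (-(3 : ℝ) / 2)
        = a ^ (-(3:ℝ)/2) * v ^ (-(3:ℝ)/2) := by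
      rw [hgS, hlwt, div_eq_mul_inv, ← hvdef]
      rw [Real.mul_rpow hapos.le hv.le]
    rw [harg, hgS', Real.exp_add]
    -- bound |d|
    have hdb : |d| ≤ Kd * v^2 := by
      have hLle : t*(T-t) ≤ T^2/4 := by nlinarith [sq_nonneg (T - 2*t)]
      have habs : |T-2*t| ≤ T := abs_le.2 ⟨by linarith [ht.2], by linarith [ht.1]⟩
      have hnum : |4*(t*(T-t))^3*(T-2*t)| ≤ Kd := by
        rw [abs_mul, abs_of_nonneg (show (0:ℝ) ≤ 4*(t*(T-t))^3 by positivity), hKddef]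
        have h3 : (t*(T-t))^3 ≤ (T^2/4)^3 := pow_le_pow_left₀ hLpos.le hLle 3
        exact mul_le_mul (by linarith) habs (abs_nonneg _) (by positivity)
      have hv2 : v^2 = (((t*(T-t))^4)^2)⁻¹ := by rw [hvdef]; exact inv_pow _ 2
      rw [hddef, abs_div, abs_neg, abs_of_nonneg (show (0:ℝ) ≤ ((t*(T-t))^4)^2 by positivity),
        div_eq_mul_inv, hv2]
      exact mul_le_mul_of_nonneg_right hnum (by positivity)
    -- key power estimates
    have hA1 : |d| * v ^ ((13:ℝ)/8) ≤ Kd * (C₁ * Real.exp (B*v) * v ^ (-(3:ℝ)/2)) := by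
      calc |d| * v ^ ((13:ℝ)/8) ≤ (Kd * v^2) * v ^ ((13:ℝ)/8) :=
            mul_le_mul_of_nonneg_right hdb (Real.rpow_nonneg hv.le _)
        _ = Kd * (v ^ ((41:ℝ)/8) * v ^ (-(3:ℝ)/2)) := by
            rw [mul_assoc]
            congr 1
            rw [← Real.rpow_natCast v 2, ← Real.rpow_add hv, ← Real.rpow_add hv]
            norm_num
        _ ≤ Kd * ((C₁ * Real.exp (B*v)) * v ^ (-(3:ℝ)/2)) := by
            refine mul_le_mul_of_nonneg_left ?_ hKd0.le
            exact mul_le_mul_of_nonneg_right (hC₁le v hv) (Real.rpow_nonneg hv.le _)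
        _ = Kd * (C₁ * Real.exp (B*v) * v ^ (-(3:ℝ)/2)) := by ring
    have hA2 : |d| * v ^ ((13:ℝ)/8 - 1) ≤ Kd * (C₂ * Real.exp (B*v) * v ^ (-(3:ℝ)/2)) := by
      calc |d| * v ^ ((13:ℝ)/8 - 1) ≤ (Kd * v^2) * v ^ ((13:ℝ)/8 - 1) :=
            mul_le_mul_of_nonneg_right hdb (Real.rpow_nonneg hv.le _)
        _ = Kd * (v ^ ((33:ℝ)/8) * v ^ (-(3:ℝ)/2)) := by
            rw [mul_assoc]
            congr 1
            rw [← Real.rpow_natCast v 2, ← Real.rpow_add hv, ← Real.rpow_add hv]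
            norm_num
        _ ≤ Kd * ((C₂ * Real.exp (B*v)) * v ^ (-(3:ℝ)/2)) := by
            refine mul_le_mul_of_nonneg_left ?_ hKd0.le
            exact mul_le_mul_of_nonneg_right (hC₂le v hv) (Real.rpow_nonneg hv.le _)
        _ = Kd * (C₂ * Real.exp (B*v) * v ^ (-(3:ℝ)/2)) := by ring
    have haa : a ^ ((3:ℝ)/2) * a ^ (-(3:ℝ)/2) = 1 := by
      rw [← Real.rpow_add hapos]
      norm_num
    calc |Real.exp (c₁ * v) * (c₁ * d) * v ^ ((13:ℝ)/8)
          + Real.exp (c₁ * v) * (d * ((13:ℝ)/8) * v ^ ((13:ℝ)/8 - 1))|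
        ≤ |Real.exp (c₁ * v) * (c₁ * d) * v ^ ((13:ℝ)/8)|
          + |Real.exp (c₁ * v) * (d * ((13:ℝ)/8) * v ^ ((13:ℝ)/8 - 1))| := abs_add_le _ _
      _ = Real.exp (c₁ * v) * (|c₁| * (|d| * v ^ ((13:ℝ)/8)))
          + Real.exp (c₁ * v) * (((13:ℝ)/8) * (|d| * v ^ ((13:ℝ)/8 - 1))) := by
          simp only [abs_mul, Real.abs_exp]
          rw [abs_of_nonneg (Real.rpow_nonneg hv.le ((13:ℝ)/8)),
            abs_of_nonneg (Real.rpow_nonneg hv.le ((13:ℝ)/8 - 1)),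
            abs_of_nonneg (show (0:ℝ) ≤ (13:ℝ)/8 by norm_num)]
          ring
      _ ≤ Real.exp (c₁ * v) * (|c₁| * (Kd * (C₁ * Real.exp (B*v) * v ^ (-(3:ℝ)/2))))
          + Real.exp (c₁ * v) * (((13:ℝ)/8) * (Kd * (C₂ * Real.exp (B*v) * v ^ (-(3:ℝ)/2)))) := by
          gcongr
      _ = (a ^ ((3:ℝ)/2) * a ^ (-(3:ℝ)/2)) * (Kd * (|c₁| * C₁ + ((13:ℝ)/8)*C₂)
          * (Real.exp (c₁*v) * Real.exp (B*v) * v ^ (-(3:ℝ)/2))) := by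
          rw [haa]
          ring
      _ = C * (Real.exp (c₁ * v) * Real.exp (B * v)) * (a ^ (-(3:ℝ)/2) * v ^ (-(3:ℝ)/2)) := by
          rw [hCdef]
          ring
end
end

section
/- There exists λ₀ > 0 such that for every λ ≥ λ₀ there exist s₀ > 0 and, for each s ≥ s₀(T⁴ + T⁸), a constant C > 0 (depending on Ω, λ, s, T and η₀) such that the function ρ(t) = e^{−(s/2)β*(t)} γ̂(t)^{−25/8} satisfies |ρ′(t)| ≤ C e^{(s/2)β*(t) − sβ̂(t)} γ̂(t)^{13/8} for all t ∈ (0,T). -/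
open MeasureTheory Real Set Filter Metric

noncomputable section
set_option maxHeartbeats 1000000

lemma csSup_affine (S : Set ℝ) (hne : S.Nonempty) (hbd : BddAbove S) (E c : ℝ) (hc : 0 < c) :
    sSup ((fun y => (y - E) / c) '' S) = (sSup S - E) / c :=
  (Monotone.map_csSup_of_continuousAt (by fun_prop)
    (fun a b hab => by gcongr) hne hbd).symm

lemma csInf_affine (S : Set ℝ) (hne : S.Nonempty) (hbd : BddBelow S) (E c : ℝ) (hc : 0 < c) :
    sInf ((fun y => (y - E) / c) '' S) = (sInf S - E) / c :=
  (Monotone.map_csInf_of_continuousAt (by fun_prop)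
    (fun a b hab => by gcongr) hne hbd).symm

lemma csInfDiv (S : Set ℝ) (hne : S.Nonempty) (hbd : BddBelow S) (c : ℝ) (hc : 0 < c) :
    sInf ((fun y => y / c) '' S) = sInf S / c :=
  (Monotone.map_csInf_of_continuousAt (by fun_prop)
    (fun a b hab => by gcongr) hne hbd).symm


lemma sq_div_four_le_exp {y : ℝ} (hy : 0 ≤ y) : y ^ 2 / 4 ≤ Real.exp y := by
  have h := Real.add_one_le_exp (y / 2)
  have h2 : Real.exp y = Real.exp (y / 2) * Real.exp (y / 2) := by
    rw [← Real.exp_add]; ring_nf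
  nlinarith [Real.exp_pos (y / 2)]



/-- Bound for the time derivative of the weight
`ρ(t) = e^{−(s/2)β*} γ̂^{−25/8}`. -/
theorem weight_rho_case2_estimate
    (N : ℕ) (hN : N = 2 ∨ N = 3) (Ω : Set (Fin N → ℝ))
    (hΩo : IsOpen Ω) (hΩconn : IsConnected Ω) (hΩb : Bornology.IsBounded Ω)
    (T : ℝ) (hT : 0 < T)
    (ω₀ ω' ω : Set (Fin N → ℝ)) (hω₀o : IsOpen ω₀) (hω'o : IsOpen ω') (hωo : IsOpen ω)
    (hω₀ne : ω₀.Nonempty) (hω'ne : ω'.Nonempty) (hωne : ω.Nonempty)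
    (hω₀ω' : closure ω₀ ⊆ ω') (hω'ω : closure ω' ⊆ ω) (hωΩ : closure ω ⊆ Ω)
    (η₀ : (Fin N → ℝ) → ℝ) (hη₀sm : ContDiffOn ℝ 2 η₀ (closure Ω))
    (hη₀pos : ∀ x ∈ Ω, 0 < η₀ x) (hη₀bd : ∀ x ∈ frontier Ω, η₀ x = 0)
    (hη₀grad : ∀ x ∈ closure Ω \ ω₀, 0 < eunorm (grad η₀ x))
    :
    ∃ lam₀ > (0 : ℝ), ∀ lam : ℝ, lam₀ ≤ lam →
      ∃ s₀ > (0 : ℝ), ∀ s : ℝ, s₀ * (T ^ 4 + T ^ 8) ≤ s →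
        ∃ C > (0 : ℝ), ∀ t ∈ Ioo (0 : ℝ) T, t ≠ T / 2 →
          |deriv (fun τ => Real.exp (-(s / 2) * betaStar Ω T lam η₀ τ) *
              gamHat Ω T lam η₀ τ ^ (-(25 : ℝ) / 8)) t| ≤
            C * Real.exp ((s / 2) * betaStar Ω T lam η₀ t - s * betaHat Ω T lam η₀ t) *
              gamHat Ω T lam η₀ t ^ ((13 : ℝ) / 8) := by
  refine ⟨1, one_pos, fun lam hlam => ⟨1, one_pos, fun s hs => ?_⟩⟩
  have hs0 : 0 < s := by linarith [pow_pos hT 4, pow_pos hT 8]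
  -- compact setup
  have hKc : IsCompact (closure Ω) := hΩb.isCompact_closure
  have hKne : (closure Ω).Nonempty := hΩconn.nonempty.closure
  have hcont : ContinuousOn (fun x => Real.exp (lam * η₀ x)) (closure Ω) :=
    Real.continuous_exp.comp_continuousOn (continuousOn_const.mul hη₀sm.continuousOn)
  set S := (fun x => Real.exp (lam * η₀ x)) '' closure Ω with hSdef
  have hSc : IsCompact S := hKc.image_of_continuousOn hcont
  have hSne : S.Nonempty := hKne.image _
  have hSbdd : BddAbove S := hSc.bddAbove
  have hSbdb : BddBelow S := hSc.bddBelow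
  set A := sSup S with hAdef
  set m := sInf S with hmdef
  have hm : 0 < m := by
    obtain ⟨x, hx, hxe⟩ := hSc.sInf_mem hSne
    rw [hmdef, ← hxe]; positivity
  have hmA : m < A := by
    obtain ⟨x₁, hx₁⟩ := hΩconn.nonempty
    have hfr : (frontier Ω).Nonempty := by
      rw [nonempty_frontier_iff]
      refine ⟨hΩconn.nonempty, fun huniv => ?_⟩
      obtain ⟨r, hr⟩ := hΩb.subset_ball (0 : Fin N → ℝ)
      have hi : (0 : ℕ) < N := by omega
      set q : Fin N → ℝ := fun _ => |r| + 1 with hq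
      have hqΩ : q ∈ Ω := huniv ▸ mem_univ q
      have h1 : dist q 0 < r := mem_ball.mp (hr hqΩ)
      have h2 : dist (q ⟨0, hi⟩) ((0 : Fin N → ℝ) ⟨0, hi⟩) ≤ dist q 0 :=
        dist_le_pi_dist q 0 ⟨0, hi⟩
      have h3 : dist (q ⟨0, hi⟩) ((0 : Fin N → ℝ) ⟨0, hi⟩) = |r| + 1 := by
        simp [hq, Real.dist_eq, abs_of_nonneg]
        positivity
      have := le_abs_self r
      rw [h3] at h2; linarith
    obtain ⟨x₂, hx₂⟩ := hfr
    have hx₂K : x₂ ∈ closure Ω := frontier_subset_closure hx₂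
    have hub : m ≤ 1 := by
      have := csInf_le hSbdb ⟨x₂, hx₂K, rfl⟩
      simp only [hη₀bd x₂ hx₂, mul_zero, Real.exp_zero] at this
      exact this
    have hlb : Real.exp (lam * η₀ x₁) ≤ A := le_csSup hSbdd ⟨x₁, subset_closure hx₁, rfl⟩
    have h1 : (1 : ℝ) < Real.exp (lam * η₀ x₁) := by
      rw [← Real.exp_zero]
      exact Real.exp_lt_exp.mpr (mul_pos (lt_of_lt_of_le one_pos hlam) (hη₀pos x₁ hx₁))
    linarith
  -- constants
  set E := Real.exp (2 * lam * supAbs Ω η₀) with hEdef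
  set c₁ := s / 2 * (E - A) with hc₁def
  set c := s * (A - m) with hcdef
  have hc : 0 < c := mul_pos hs0 (by linarith)
  have hT2 : (0 : ℝ) < T ^ 2 / 4 := by positivity
  set Dmx := (T ^ 2 / 4) ^ 4 with hDmxdef
  have hDmx : 0 < Dmx := pow_pos hT2 4
  set K₁ := 4 * (T ^ 2 / 4) ^ 3 * T with hK₁def
  have hK₁ : 0 < K₁ := by rw [hK₁def]; positivity
  set K₂ := (m / Dmx) ^ ((19 : ℝ) / 4) with hK₂def
  have hK₂ : 0 < K₂ := Real.rpow_pos_of_pos (div_pos hm hDmx) _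
  set Q := 4 * K₁ * |c₁| / c ^ 2 + 4 * K₁ / c with hQdef
  have hQ : 0 ≤ Q := by
    apply add_nonneg <;> apply div_nonneg <;> positivity
  refine ⟨Q / K₂ + 1, by positivity, fun t ht htne => ?_⟩
  -- identification of the weights
  have hIdent : ∀ τ : ℝ, 0 < lW T τ →
      betaStar Ω T lam η₀ τ = (A - E) / (lW T τ) ^ 4 ∧
      betaHat Ω T lam η₀ τ = (m - E) / (lW T τ) ^ 4 ∧
      gamHat Ω T lam η₀ τ = m / (lW T τ) ^ 4 := by
    intro τ hl
    have hl4 : 0 < (lW T τ) ^ 4 := pow_pos hl 4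
    have himg1 : (fun x => betaW Ω T lam η₀ x τ) '' closure Ω
        = (fun y => (y - E) / (lW T τ) ^ 4) '' S := by
      rw [hSdef, ← Set.image_comp]; rfl
    have himg2 : (fun x => gamW T lam η₀ x τ) '' closure Ω
        = (fun y => y / (lW T τ) ^ 4) '' S := by
      rw [hSdef, ← Set.image_comp]; rfl
    refine ⟨?_, ?_, ?_⟩
    · rw [betaStar, himg1, csSup_affine S hSne hSbdd E _ hl4, hAdef]
    · rw [betaHat, himg1, csInf_affine S hSne hSbdb E _ hl4, hmdef]
    · rw [gamHat, himg2, csInfDiv S hSne hSbdb _ hl4, hmdef]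
  obtain ⟨ht0, htT⟩ := ht
  rcases lt_or_gt_of_ne htne with hlt | hgt
  · -- t < T/2 : locally constant
    have hconst : ∀ τ ∈ Iio (T / 2),
        (fun τ => Real.exp (-(s / 2) * betaStar Ω T lam η₀ τ) *
          gamHat Ω T lam η₀ τ ^ (-(25 : ℝ) / 8)) τ
        = Real.exp (-(s / 2) * ((A - E) / (T ^ 2 / 4) ^ 4)) *
          (m / (T ^ 2 / 4) ^ 4) ^ (-(25 : ℝ) / 8) := by
      intro τ hτ
      have hlw : lW T τ = T ^ 2 / 4 := if_pos (le_of_lt hτ)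
      obtain ⟨h1, _, h3⟩ := hIdent τ (by rw [hlw]; exact hT2)
      simp only [h1, h3, hlw]
    have hev : (fun τ => Real.exp (-(s / 2) * betaStar Ω T lam η₀ τ) *
          gamHat Ω T lam η₀ τ ^ (-(25 : ℝ) / 8)) =ᶠ[nhds t]
        (fun _ => Real.exp (-(s / 2) * ((A - E) / (T ^ 2 / 4) ^ 4)) *
          (m / (T ^ 2 / 4) ^ 4) ^ (-(25 : ℝ) / 8)) :=
      eventuallyEq_of_mem (Iio_mem_nhds hlt) hconst
    rw [hev.deriv_eq, deriv_const]
    rw [abs_zero]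
    have hlwt : lW T t = T ^ 2 / 4 := if_pos (le_of_lt hlt)
    obtain ⟨h1, h2, h3⟩ := hIdent t (by rw [hlwt]; exact hT2)
    rw [h1, h2, h3]
    have : (0:ℝ) < m / (lW T t) ^ 4 := div_pos hm (by rw [hlwt]; positivity)
    positivity
  · -- t > T/2
    have hG : 0 < t * (T - t) := mul_pos (by linarith) (by linarith)
    have hGle : t * (T - t) ≤ T ^ 2 / 4 := by nlinarith [sq_nonneg (T - 2 * t)]
    have hD : 0 < (t * (T - t)) ^ 4 := pow_pos hG 4
    have hDle : (t * (T - t)) ^ 4 ≤ Dmx := by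
      rw [hDmxdef]; exact pow_le_pow_left₀ hG.le hGle 4
    have hmD : 0 < m / (t * (T - t)) ^ 4 := div_pos hm hD
    have hlwt : lW T t = t * (T - t) := if_neg (not_le.mpr hgt)
    -- local form of the function
    have hloc : ∀ τ ∈ Ioo (T / 2) T,
        (fun τ => Real.exp (-(s / 2) * betaStar Ω T lam η₀ τ) *
          gamHat Ω T lam η₀ τ ^ (-(25 : ℝ) / 8)) τ
        = Real.exp (c₁ / (τ * (T - τ)) ^ 4) *
            (m / (τ * (T - τ)) ^ 4) ^ (-(25 : ℝ) / 8) := by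
      intro τ hτ
      have hlw : lW T τ = τ * (T - τ) := if_neg (not_le.mpr hτ.1)
      have hGτ : 0 < τ * (T - τ) :=
        mul_pos (lt_trans (by linarith) hτ.1) (by have := hτ.2; linarith)
      obtain ⟨h1, _, h3⟩ := hIdent τ (by rw [hlw]; exact hGτ)
      simp only [h1, h3, hlw]
      congr 2
      rw [hc₁def]; field_simp; ring
    have hev : (fun τ => Real.exp (-(s / 2) * betaStar Ω T lam η₀ τ) *
          gamHat Ω T lam η₀ τ ^ (-(25 : ℝ) / 8)) =ᶠ[nhds t]
        (fun τ => Real.exp (c₁ / (τ * (T - τ)) ^ 4) *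
          (m / (τ * (T - τ)) ^ 4) ^ (-(25 : ℝ) / 8)) :=
      eventuallyEq_of_mem (Ioo_mem_nhds hgt htT) hloc
    -- derivative computation
    have hgd : HasDerivAt (fun τ : ℝ => τ * (T - τ)) (T - 2 * t) t := by
      have h1 : HasDerivAt (fun τ : ℝ => τ * (T - τ)) (1 * (T - t) + t * (0 - 1)) t :=
        (hasDerivAt_id t).mul ((hasDerivAt_const t T).sub (hasDerivAt_id t))
      convert h1 using 1
      ring
    have hwd : HasDerivAt (fun τ : ℝ => (τ * (T - τ)) ^ 4)
        (4 * (t * (T - t)) ^ 3 * (T - 2 * t)) t := by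
      have : HasDerivAt (fun τ : ℝ => (τ * (T - τ)) ^ 4)
          (((4 : ℕ) : ℝ) * (t * (T - t)) ^ (4 - 1) * (T - 2 * t)) t := hgd.pow 4
      convert this using 1
      norm_num
    have hud : HasDerivAt (fun τ : ℝ => c₁ / (τ * (T - τ)) ^ 4)
        (-(c₁ * (4 * (t * (T - t)) ^ 3 * (T - 2 * t))) / ((t * (T - t)) ^ 4) ^ 2) t := by
      have : HasDerivAt (fun τ : ℝ => c₁ / (τ * (T - τ)) ^ 4) _ t :=
        (hasDerivAt_const t c₁).div hwd (ne_of_gt hD)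
      convert this using 1
      ring
    have hvd : HasDerivAt (fun τ : ℝ => m / (τ * (T - τ)) ^ 4)
        (-(m * (4 * (t * (T - t)) ^ 3 * (T - 2 * t))) / ((t * (T - t)) ^ 4) ^ 2) t := by
      have : HasDerivAt (fun τ : ℝ => m / (τ * (T - τ)) ^ 4) _ t :=
        (hasDerivAt_const t m).div hwd (ne_of_gt hD)
      convert this using 1
      ring
    have hvp := hvd.rpow_const (p := -(25 : ℝ) / 8) (Or.inl (ne_of_gt hmD))
    have hde := (hud.exp).mul hvp
    have hderiv := HasDerivAt.deriv (f := fun τ => Real.exp (c₁ / (τ * (T - τ)) ^ 4) *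
          (m / (τ * (T - τ)) ^ 4) ^ (-(25 : ℝ) / 8)) hde
    have hderiv2 : deriv (fun τ => Real.exp (c₁ / (τ * (T - τ)) ^ 4) *
          (m / (τ * (T - τ)) ^ 4) ^ (-(25 : ℝ) / 8)) t
        = -(Real.exp (c₁ / (t * (T - t)) ^ 4) *
            (m / (t * (T - t)) ^ 4) ^ (-(25 : ℝ) / 8) *
            ((4 * (t * (T - t)) ^ 3 * (T - 2 * t)) / (t * (T - t)) ^ 4 *
              (c₁ / (t * (T - t)) ^ 4 + (-(25 : ℝ) / 8)))) := by
      rw [hderiv, Real.rpow_sub_one (ne_of_gt hmD)]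
      field_simp
      ring
    obtain ⟨hbs, hbh, hgh⟩ := hIdent t (by rw [hlwt]; exact hG)
    rw [hev.deriv_eq, hderiv2, hbs, hbh, hgh, hlwt]
    have hexpsplit : s / 2 * ((A - E) / (t * (T - t)) ^ 4) - s * ((m - E) / (t * (T - t)) ^ 4)
        = c₁ / (t * (T - t)) ^ 4 + c / (t * (T - t)) ^ 4 := by
      rw [hc₁def, hcdef]; field_simp; ring
    have hpow : (m / (t * (T - t)) ^ 4) ^ ((13 : ℝ) / 8)
        = (m / (t * (T - t)) ^ 4) ^ (-(25 : ℝ) / 8) *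
          (m / (t * (T - t)) ^ 4) ^ ((19 : ℝ) / 4) := by
      rw [← Real.rpow_add hmD]; norm_num
    rw [hexpsplit, Real.exp_add, hpow, abs_neg, abs_mul, abs_mul]
    have hEXpos : 0 < Real.exp (c₁ / (t * (T - t)) ^ 4) := Real.exp_pos _
    have hPpos : 0 < (m / (t * (T - t)) ^ 4) ^ (-(25 : ℝ) / 8) :=
      Real.rpow_pos_of_pos hmD _
    have hE2pos : 0 < Real.exp (c / (t * (T - t)) ^ 4) := Real.exp_pos _
    have hR2pos : 0 < (m / (t * (T - t)) ^ 4) ^ ((19 : ℝ) / 4) :=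
      Real.rpow_pos_of_pos hmD _
    rw [abs_of_pos hEXpos, abs_of_pos hPpos]
    -- core inequality
    have hcD : 0 ≤ c / (t * (T - t)) ^ 4 := le_of_lt (div_pos hc hD)
    have he1 : c / (t * (T - t)) ^ 4 ≤ Real.exp (c / (t * (T - t)) ^ 4) := by
      linarith [Real.add_one_le_exp (c / (t * (T - t)) ^ 4)]
    have he2 : (c / (t * (T - t)) ^ 4) ^ 2 / 4 ≤ Real.exp (c / (t * (T - t)) ^ 4) :=
      sq_div_four_le_exp hcD
    have hW1 : |4 * (t * (T - t)) ^ 3 * (T - 2 * t)| ≤ K₁ := by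
      rw [hK₁def, abs_mul, abs_of_nonneg (by positivity : (0:ℝ) ≤ 4 * (t * (T - t)) ^ 3)]
      have habs2 : |T - 2 * t| ≤ T := abs_le.mpr ⟨by linarith, by linarith⟩
      have hG3 : (t * (T - t)) ^ 3 ≤ (T ^ 2 / 4) ^ 3 := pow_le_pow_left₀ hG.le hGle 3
      have hmm := mul_le_mul hG3 habs2 (abs_nonneg _) (pow_nonneg hT2.le 3)
      linarith
    have hW2 : |c₁ / (t * (T - t)) ^ 4 + (-(25 : ℝ) / 8)| ≤ |c₁| / (t * (T - t)) ^ 4 + 4 := by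
      calc |c₁ / (t * (T - t)) ^ 4 + (-(25 : ℝ) / 8)|
          ≤ |c₁ / (t * (T - t)) ^ 4| + |(-(25 : ℝ) / 8)| := abs_add_le _ _
        _ = |c₁| / (t * (T - t)) ^ 4 + 25 / 8 := by
            rw [abs_div, abs_of_pos hD]; norm_num
        _ ≤ |c₁| / (t * (T - t)) ^ 4 + 4 := by norm_num
    have hR2 : K₂ ≤ (m / (t * (T - t)) ^ 4) ^ ((19 : ℝ) / 4) := by
      rw [hK₂def]
      exact Real.rpow_le_rpow (div_nonneg hm.le hDmx.le)
        (div_le_div_of_nonneg_left hm.le hD hDle) (by norm_num)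
    have hcore : |(4 * (t * (T - t)) ^ 3 * (T - 2 * t)) / (t * (T - t)) ^ 4 *
          (c₁ / (t * (T - t)) ^ 4 + (-(25 : ℝ) / 8))|
        ≤ (Q / K₂ + 1) * Real.exp (c / (t * (T - t)) ^ 4) *
            (m / (t * (T - t)) ^ 4) ^ ((19 : ℝ) / 4) := by
      have hstep1 : |(4 * (t * (T - t)) ^ 3 * (T - 2 * t)) / (t * (T - t)) ^ 4 *
            (c₁ / (t * (T - t)) ^ 4 + (-(25 : ℝ) / 8))|
          ≤ K₁ / (t * (T - t)) ^ 4 * (|c₁| / (t * (T - t)) ^ 4 + 4) := by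
        rw [abs_mul, abs_div, abs_of_pos hD]
        gcongr
      have hstep2 : K₁ / (t * (T - t)) ^ 4 * (|c₁| / (t * (T - t)) ^ 4 + 4)
          ≤ Q * Real.exp (c / (t * (T - t)) ^ 4) := by
        rw [hQdef]
        have hid : K₁ / (t * (T - t)) ^ 4 * (|c₁| / (t * (T - t)) ^ 4 + 4)
            = (4 * K₁ * |c₁| / c ^ 2) * ((c / (t * (T - t)) ^ 4) ^ 2 / 4)
              + (4 * K₁ / c) * (c / (t * (T - t)) ^ 4) := by
          field_simp
        rw [hid]
        have hn1 : (0:ℝ) ≤ 4 * K₁ * |c₁| / c ^ 2 :=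
          div_nonneg (mul_nonneg (by linarith : (0:ℝ) ≤ 4 * K₁) (abs_nonneg _))
            (by positivity)
        have hn2 : (0:ℝ) ≤ 4 * K₁ / c := div_nonneg (by linarith) hc.le
        calc (4 * K₁ * |c₁| / c ^ 2) * ((c / (t * (T - t)) ^ 4) ^ 2 / 4)
              + (4 * K₁ / c) * (c / (t * (T - t)) ^ 4)
            ≤ (4 * K₁ * |c₁| / c ^ 2) * Real.exp (c / (t * (T - t)) ^ 4)
              + (4 * K₁ / c) * Real.exp (c / (t * (T - t)) ^ 4) :=
              add_le_add (mul_le_mul_of_nonneg_left he2 hn1)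
                (mul_le_mul_of_nonneg_left he1 hn2)
          _ = (4 * K₁ * |c₁| / c ^ 2 + 4 * K₁ / c) * Real.exp (c / (t * (T - t)) ^ 4) := by
              ring
      have hstep3 : Q * Real.exp (c / (t * (T - t)) ^ 4)
          ≤ (Q / K₂ + 1) * Real.exp (c / (t * (T - t)) ^ 4) *
              (m / (t * (T - t)) ^ 4) ^ ((19 : ℝ) / 4) := by
        calc Q * Real.exp (c / (t * (T - t)) ^ 4)
            = Q / K₂ * Real.exp (c / (t * (T - t)) ^ 4) * K₂ := by
              field_simp
          _ ≤ Q / K₂ * Real.exp (c / (t * (T - t)) ^ 4) *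
                (m / (t * (T - t)) ^ 4) ^ ((19 : ℝ) / 4) :=
              mul_le_mul_of_nonneg_left hR2
                (mul_nonneg (div_nonneg hQ hK₂.le) hE2pos.le)
          _ ≤ (Q / K₂ + 1) * Real.exp (c / (t * (T - t)) ^ 4) *
                (m / (t * (T - t)) ^ 4) ^ ((19 : ℝ) / 4) :=
              mul_le_mul_of_nonneg_right (mul_le_mul_of_nonneg_right
                (by linarith) hE2pos.le) hR2pos.le
      linarith [hstep1.trans (hstep2.trans hstep3)]
    calc Real.exp (c₁ / (t * (T - t)) ^ 4) * (m / (t * (T - t)) ^ 4) ^ (-(25 : ℝ) / 8) *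
          |(4 * (t * (T - t)) ^ 3 * (T - 2 * t)) / (t * (T - t)) ^ 4 *
            (c₁ / (t * (T - t)) ^ 4 + (-(25 : ℝ) / 8))|
        ≤ Real.exp (c₁ / (t * (T - t)) ^ 4) * (m / (t * (T - t)) ^ 4) ^ (-(25 : ℝ) / 8) *
            ((Q / K₂ + 1) * Real.exp (c / (t * (T - t)) ^ 4) *
              (m / (t * (T - t)) ^ 4) ^ ((19 : ℝ) / 4)) :=
          mul_le_mul_of_nonneg_left hcore (mul_nonneg hEXpos.le hPpos.le)
      _ = (Q / K₂ + 1) *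
            (Real.exp (c₁ / (t * (T - t)) ^ 4) * Real.exp (c / (t * (T - t)) ^ 4)) *
            ((m / (t * (T - t)) ^ 4) ^ (-(25 : ℝ) / 8) *
              (m / (t * (T - t)) ^ 4) ^ ((19 : ℝ) / 4)) := by
          ring
end
end
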